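/- Let ρ be any 2×2 complex matrix and w_ρ(m,α,β) = Tr(ρ · U(m,α,β)) its qubit tomogram. Define the kernel K_z(m,α,β; m',α',β') = (1/2)·δ_{m m'}·(1 − 3 cos α sin β cos α' sin β' − 3 sin α sin β sin α' sin β' + 3 cos β cos β'). Then for all m ∈ {−1/2,1/2} and real α, β: Σ_{m' ∈ {−1/2,1/2}} (1/(2π)) ∫₀^{2π} ∫₀^{π} K_z(m,α,β; m',α',β') · w_ρ(m',α',β') · sin β' dβ' dα' = Tr(σ_z ρ σ_z · U(m,α,β)). -/

import Mathlib

open Matrix Real MeasureTheory intervalIntegral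

noncomputable def sigmaX : Matrix (Fin 2) (Fin 2) ℂ := !![0, 1; 1, 0]
noncomputable def sigmaY : Matrix (Fin 2) (Fin 2) ℂ := !![0, -Complex.I; Complex.I, 0]
noncomputable def sigmaZ : Matrix (Fin 2) (Fin 2) ℂ := !![1, 0; 0, -1]

/-- The qubit de-quantizer U(m, α, β). -/
noncomputable def dequantizer (m α β : ℝ) : Matrix (Fin 2) (Fin 2) ℂ :=
  (1/2 : ℂ) • (1 : Matrix (Fin 2) (Fin 2) ℂ)
    - ((m * Real.cos α * Real.sin β : ℝ) : ℂ) • sigmaX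
    - ((m * Real.sin α * Real.sin β : ℝ) : ℂ) • sigmaY
    + ((m * Real.cos β : ℝ) : ℂ) • sigmaZ

/-- The qubit tomogram of a 2×2 complex matrix ρ. -/
noncomputable def tomogram (ρ : Matrix (Fin 2) (Fin 2) ℂ) (m α β : ℝ) : ℂ :=
  (ρ * dequantizer m α β).trace

/-- The tomographic kernel of the channel ρ ↦ sigmaZ ρ sigmaZ. -/
noncomputable def kernelZ (m α β m' α' β' : ℝ) : ℝ :=
  (1/2) * (if m = m' then (1:ℝ) else 0) *
    (1 - 3 * Real.cos α * Real.sin β * Real.cos α' * Real.sin β'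
      - 3 * Real.sin α * Real.sin β * Real.sin α' * Real.sin β'
      + 3 * Real.cos β * Real.cos β')

lemma tomogram_eq (ρ : Matrix (Fin 2) (Fin 2) ℂ) (m' α' β' : ℝ) :
    tomogram ρ m' α' β' = (1/2:ℂ)*ρ.trace
      - ((m' * Real.cos α' * Real.sin β' : ℝ):ℂ) * (ρ*sigmaX).trace
      - ((m' * Real.sin α' * Real.sin β' : ℝ):ℂ) * (ρ*sigmaY).trace
      + ((m' * Real.cos β' : ℝ):ℂ) * (ρ*sigmaZ).trace := by
  simp [tomogram, dequantizer, Matrix.mul_sub, Matrix.mul_add, Matrix.mul_smul,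
    Matrix.mul_one, Matrix.trace_sub, Matrix.trace_add, Matrix.trace_smul, smul_eq_mul]

lemma rhs_eq (ρ : Matrix (Fin 2) (Fin 2) ℂ) (m α β : ℝ) :
    (sigmaZ * ρ * sigmaZ * dequantizer m α β).trace = (1/2:ℂ)*ρ.trace
      + ((m * Real.cos α * Real.sin β : ℝ):ℂ) * (ρ*sigmaX).trace
      + ((m * Real.sin α * Real.sin β : ℝ):ℂ) * (ρ*sigmaY).trace
      + ((m * Real.cos β : ℝ):ℂ) * (ρ*sigmaZ).trace := by
  have e1 : (sigmaZ*ρ*sigmaZ).trace = ρ.trace := by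
    simp only [Matrix.trace_fin_two, Matrix.mul_apply, Fin.sum_univ_two, sigmaZ,
      Matrix.cons_val', Matrix.cons_val_zero, Matrix.cons_val_one, Matrix.head_cons,
      Matrix.empty_val', Matrix.cons_val_fin_one, Matrix.head_fin_const, Matrix.of_apply]
    ring
  have e2 : (sigmaZ*ρ*sigmaZ*sigmaX).trace = -(ρ*sigmaX).trace := by
    simp only [Matrix.trace_fin_two, Matrix.mul_apply, Fin.sum_univ_two, sigmaZ, sigmaX,
      Matrix.cons_val', Matrix.cons_val_zero, Matrix.cons_val_one, Matrix.head_cons,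
      Matrix.empty_val', Matrix.cons_val_fin_one, Matrix.head_fin_const, Matrix.of_apply]
    ring
  have e3 : (sigmaZ*ρ*sigmaZ*sigmaY).trace = -(ρ*sigmaY).trace := by
    simp only [Matrix.trace_fin_two, Matrix.mul_apply, Fin.sum_univ_two, sigmaZ, sigmaY,
      Matrix.cons_val', Matrix.cons_val_zero, Matrix.cons_val_one, Matrix.head_cons,
      Matrix.empty_val', Matrix.cons_val_fin_one, Matrix.head_fin_const, Matrix.of_apply]
    ring
  have e4 : (sigmaZ*ρ*sigmaZ*sigmaZ).trace = (ρ*sigmaZ).trace := by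
    simp only [Matrix.trace_fin_two, Matrix.mul_apply, Fin.sum_univ_two, sigmaZ,
      Matrix.cons_val', Matrix.cons_val_zero, Matrix.cons_val_one, Matrix.head_cons,
      Matrix.empty_val', Matrix.cons_val_fin_one, Matrix.head_fin_const, Matrix.of_apply]
    ring
  simp only [dequantizer, Matrix.mul_sub, Matrix.mul_add, Matrix.mul_smul, Matrix.mul_one,
    Matrix.trace_sub, Matrix.trace_add, Matrix.trace_smul, smul_eq_mul, e1, e2, e3, e4]
  push_cast
  ring

lemma iA1 : ∫ t in (0:ℝ)..π, Real.sin t = 2 := by simp; norm_num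
lemma iA2 : ∫ t in (0:ℝ)..π, Real.sin t ^ 2 = π/2 := by simp
lemma iA3 : ∫ t in (0:ℝ)..π, Real.sin t ^ 3 = 4/3 := by
  rw [integral_sin_pow_three]; simp; norm_num
lemma iA4 : ∫ t in (0:ℝ)..π, Real.sin t * Real.cos t = 0 := by simp
lemma iA5 : ∫ t in (0:ℝ)..π, Real.sin t ^ 2 * Real.cos t = 0 := by simp
lemma iA6 : ∫ t in (0:ℝ)..π, Real.sin t * Real.cos t ^ 2 = 2/3 := by
  rw [integral_sin_mul_cos_sq]; simp; norm_num
lemma iB1 : ∫ t in (0:ℝ)..2*π, (1:ℝ) = 2*π := by simp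
lemma iB2 : ∫ t in (0:ℝ)..2*π, Real.cos t = 0 := by simp [Real.sin_two_pi]
lemma iB3 : ∫ t in (0:ℝ)..2*π, Real.sin t = 0 := by simp [Real.cos_two_pi]
lemma iB4 : ∫ t in (0:ℝ)..2*π, Real.cos t ^ 2 = π := by simp [Real.sin_two_pi, Real.cos_two_pi]
lemma iB5 : ∫ t in (0:ℝ)..2*π, Real.sin t ^ 2 = π := by simp [Real.sin_two_pi, Real.cos_two_pi]
lemma iB6 : ∫ t in (0:ℝ)..2*π, Real.sin t * Real.cos t = 0 := by simp [Real.sin_two_pi]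

lemma combo (a b : ℝ) (c1 c2 c3 c4 c5 c6 : ℂ) (f1 f2 f3 f4 f5 f6 : ℝ → ℝ)
    (h1 : Continuous f1) (h2 : Continuous f2) (h3 : Continuous f3)
    (h4 : Continuous f4) (h5 : Continuous f5) (h6 : Continuous f6) :
    ∫ t in a..b, (c1 * (f1 t : ℂ) + c2 * (f2 t : ℂ) + c3 * (f3 t : ℂ)
      + c4 * (f4 t : ℂ) + c5 * (f5 t : ℂ) + c6 * (f6 t : ℂ))
    = c1 * ((∫ t in a..b, f1 t : ℝ) : ℂ) + c2 * ((∫ t in a..b, f2 t : ℝ) : ℂ)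
      + c3 * ((∫ t in a..b, f3 t : ℝ) : ℂ) + c4 * ((∫ t in a..b, f4 t : ℝ) : ℂ)
      + c5 * ((∫ t in a..b, f5 t : ℝ) : ℂ) + c6 * ((∫ t in a..b, f6 t : ℝ) : ℂ) := by
  have I : ∀ (c : ℂ) (f : ℝ → ℝ), Continuous f →
      IntervalIntegrable (fun t => c * (f t : ℂ)) volume a b := by
    intro c f hf
    exact (Continuous.mul continuous_const (Complex.continuous_ofReal.comp hf)).intervalIntegrable a b
  have J : ∀ (c : ℂ) (f : ℝ → ℝ), (∫ t in a..b, c * (f t : ℂ)) = c * ((∫ t in a..b, f t : ℝ) : ℂ) := by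
    intro c f
    rw [intervalIntegral.integral_const_mul, intervalIntegral.integral_ofReal]
  rw [intervalIntegral.integral_add (((I c1 f1 h1).add (I c2 f2 h2)).add (I c3 f3 h3) |>.add
        (I c4 f4 h4) |>.add (I c5 f5 h5)) (I c6 f6 h6),
      intervalIntegral.integral_add ((((I c1 f1 h1).add (I c2 f2 h2)).add (I c3 f3 h3)).add
        (I c4 f4 h4)) (I c5 f5 h5),
      intervalIntegral.integral_add (((I c1 f1 h1).add (I c2 f2 h2)).add (I c3 f3 h3)) (I c4 f4 h4),
      intervalIntegral.integral_add ((I c1 f1 h1).add (I c2 f2 h2)) (I c3 f3 h3),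
      intervalIntegral.integral_add (I c1 f1 h1) (I c2 f2 h2),
      J, J, J, J, J, J]

lemma innerC (c1 c2 c3 c4 c5 c6 : ℂ) :
    ∫ t in (0:ℝ)..π, (c1 * ((Real.sin t : ℝ) : ℂ) + c2 * ((Real.sin t ^ 2 : ℝ) : ℂ)
      + c3 * ((Real.sin t ^ 3 : ℝ) : ℂ) + c4 * ((Real.sin t * Real.cos t : ℝ) : ℂ)
      + c5 * ((Real.sin t ^ 2 * Real.cos t : ℝ) : ℂ)
      + c6 * ((Real.sin t * Real.cos t ^ 2 : ℝ) : ℂ))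
    = 2*c1 + ((π:ℝ):ℂ)/2*c2 + (4/3)*c3 + (2/3)*c6 := by
  have h := combo 0 π c1 c2 c3 c4 c5 c6 (fun t => Real.sin t) (fun t => Real.sin t ^ 2)
    (fun t => Real.sin t ^ 3) (fun t => Real.sin t * Real.cos t)
    (fun t => Real.sin t ^ 2 * Real.cos t) (fun t => Real.sin t * Real.cos t ^ 2)
    (by fun_prop) (by fun_prop) (by fun_prop) (by fun_prop) (by fun_prop) (by fun_prop)
  rw [h, iA1, iA2, iA3, iA4, iA5, iA6]
  push_cast; ring

lemma outerC (c1 c2 c3 c4 c5 c6 : ℂ) :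
    ∫ t in (0:ℝ)..2*π, (c1 * ((1 : ℝ) : ℂ) + c2 * ((Real.cos t : ℝ) : ℂ)
      + c3 * ((Real.sin t : ℝ) : ℂ) + c4 * ((Real.cos t ^ 2 : ℝ) : ℂ)
      + c5 * ((Real.sin t ^ 2 : ℝ) : ℂ) + c6 * ((Real.sin t * Real.cos t : ℝ) : ℂ))
    = 2*((π:ℝ):ℂ)*c1 + ((π:ℝ):ℂ)*c4 + ((π:ℝ):ℂ)*c5 := by
  have h := combo 0 (2*π) c1 c2 c3 c4 c5 c6 (fun _ => (1:ℝ)) (fun t => Real.cos t)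
    (fun t => Real.sin t) (fun t => Real.cos t ^ 2) (fun t => Real.sin t ^ 2)
    (fun t => Real.sin t * Real.cos t)
    (by fun_prop) (by fun_prop) (by fun_prop) (by fun_prop) (by fun_prop) (by fun_prop)
  rw [h, iB1, iB2, iB3, iB4, iB5, iB6]
  push_cast; ring

lemma core (ρ : Matrix (Fin 2) (Fin 2) ℂ) (m α β : ℝ) :
    (∫ α' in (0:ℝ)..(2 * Real.pi), ∫ β' in (0:ℝ)..Real.pi,
      (((1/2) * (1 - 3 * Real.cos α * Real.sin β * Real.cos α' * Real.sin β'
        - 3 * Real.sin α * Real.sin β * Real.sin α' * Real.sin β'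
        + 3 * Real.cos β * Real.cos β') : ℝ) : ℂ) * tomogram ρ m α' β'
        * ((Real.sin β' : ℝ) : ℂ))
    = ((π:ℝ):ℂ) * ρ.trace
      + 2*((π:ℝ):ℂ)*((m:ℝ):ℂ)*(((Real.cos α * Real.sin β : ℝ):ℂ) * (ρ*sigmaX).trace
        + ((Real.sin α * Real.sin β : ℝ):ℂ) * (ρ*sigmaY).trace
        + ((Real.cos β : ℝ):ℂ) * (ρ*sigmaZ).trace) := by
  set A := ρ.trace with hA
  set X := (ρ*sigmaX).trace with hX
  set Y := (ρ*sigmaY).trace with hY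
  set TZ := (ρ*sigmaZ).trace with hTZ
  have hβ : ∀ α' β' : ℝ,
      (((1/2) * (1 - 3 * Real.cos α * Real.sin β * Real.cos α' * Real.sin β'
        - 3 * Real.sin α * Real.sin β * Real.sin α' * Real.sin β'
        + 3 * Real.cos β * Real.cos β') : ℝ) : ℂ) * tomogram ρ m α' β'
        * ((Real.sin β' : ℝ) : ℂ)
      = ((1/4:ℂ)*A) * ((Real.sin β' : ℝ) : ℂ)
        + (-(((m:ℝ):ℂ)/2) * (((Real.cos α':ℝ):ℂ)*X + ((Real.sin α':ℝ):ℂ)*Y)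
            - (3/4)*A*(((Real.cos α * Real.sin β:ℝ):ℂ)*((Real.cos α':ℝ):ℂ)
              + ((Real.sin α * Real.sin β:ℝ):ℂ)*((Real.sin α':ℝ):ℂ))) * ((Real.sin β' ^ 2 : ℝ) : ℂ)
        + ((3*((m:ℝ):ℂ)/2) * (((Real.cos α * Real.sin β:ℝ):ℂ)*((Real.cos α':ℝ):ℂ)
              + ((Real.sin α * Real.sin β:ℝ):ℂ)*((Real.sin α':ℝ):ℂ))
            * (((Real.cos α':ℝ):ℂ)*X + ((Real.sin α':ℝ):ℂ)*Y)) * ((Real.sin β' ^ 3 : ℝ) : ℂ)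
        + (((m:ℝ):ℂ)/2*TZ + (3/4)*((Real.cos β:ℝ):ℂ)*A) * ((Real.sin β' * Real.cos β' : ℝ) : ℂ)
        + (-(3*((m:ℝ):ℂ)/2) * (TZ*(((Real.cos α * Real.sin β:ℝ):ℂ)*((Real.cos α':ℝ):ℂ)
              + ((Real.sin α * Real.sin β:ℝ):ℂ)*((Real.sin α':ℝ):ℂ))
            + ((Real.cos β:ℝ):ℂ)*(((Real.cos α':ℝ):ℂ)*X + ((Real.sin α':ℝ):ℂ)*Y)))
            * ((Real.sin β' ^ 2 * Real.cos β' : ℝ) : ℂ)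
        + ((3/2)*((Real.cos β:ℝ):ℂ)*((m:ℝ):ℂ)*TZ) * ((Real.sin β' * Real.cos β' ^ 2 : ℝ) : ℂ) := by
    intro α' β'
    rw [tomogram_eq]
    push_cast
    ring
  have hin : (fun α' : ℝ => ∫ β' in (0:ℝ)..Real.pi,
      (((1/2) * (1 - 3 * Real.cos α * Real.sin β * Real.cos α' * Real.sin β'
        - 3 * Real.sin α * Real.sin β * Real.sin α' * Real.sin β'
        + 3 * Real.cos β * Real.cos β') : ℝ) : ℂ) * tomogram ρ m α' β'
        * ((Real.sin β' : ℝ) : ℂ))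
    = fun α' : ℝ =>
        ((1/2)*A + ((m:ℝ):ℂ)*((Real.cos β:ℝ):ℂ)*TZ) * ((1:ℝ):ℂ)
        + (-(((π:ℝ):ℂ)*((m:ℝ):ℂ)/4)*X
            - (3*((π:ℝ):ℂ)/8)*((Real.cos α * Real.sin β:ℝ):ℂ)*A) * ((Real.cos α' : ℝ):ℂ)
        + (-(((π:ℝ):ℂ)*((m:ℝ):ℂ)/4)*Y
            - (3*((π:ℝ):ℂ)/8)*((Real.sin α * Real.sin β:ℝ):ℂ)*A) * ((Real.sin α' : ℝ):ℂ)
        + (2*((m:ℝ):ℂ)*((Real.cos α * Real.sin β:ℝ):ℂ)*X) * ((Real.cos α' ^ 2 : ℝ):ℂ)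
        + (2*((m:ℝ):ℂ)*((Real.sin α * Real.sin β:ℝ):ℂ)*Y) * ((Real.sin α' ^ 2 : ℝ):ℂ)
        + (2*((m:ℝ):ℂ)*(((Real.cos α * Real.sin β:ℝ):ℂ)*Y
            + ((Real.sin α * Real.sin β:ℝ):ℂ)*X)) * ((Real.sin α' * Real.cos α' : ℝ):ℂ) := by
    funext α'
    simp only [hβ]
    rw [innerC]
    push_cast
    ring
  rw [hin, outerC]
  push_cast
  ring


theorem kernelZ_represents (ρ : Matrix (Fin 2) (Fin 2) ℂ) :
    ∀ m : ℝ, m = -(1/2) ∨ m = 1/2 → ∀ α β : ℝ,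
      (1 / (2 * (Real.pi : ℂ))) *
        ∫ α' in (0:ℝ)..(2 * Real.pi), ∫ β' in (0:ℝ)..Real.pi,
          ((kernelZ m α β (1/2) α' β' : ℂ) * tomogram ρ (1/2) α' β'
            + (kernelZ m α β (-(1/2)) α' β' : ℂ) * tomogram ρ (-(1/2)) α' β')
          * (Real.sin β' : ℂ)
      = (sigmaZ * ρ * sigmaZ * dequantizer m α β).trace := by
  intro m hm α β
  have hπ : ((π:ℝ):ℂ) ≠ 0 := by exact_mod_cast Real.pi_ne_zero
  rcases hm with rfl | rfl
  · have hk : ∀ α' β' : ℝ,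
        ((kernelZ (-(1/2)) α β (1/2) α' β' : ℂ) * tomogram ρ (1/2) α' β'
          + (kernelZ (-(1/2)) α β (-(1/2)) α' β' : ℂ) * tomogram ρ (-(1/2)) α' β')
          * (Real.sin β' : ℂ)
        = (((1/2) * (1 - 3 * Real.cos α * Real.sin β * Real.cos α' * Real.sin β'
            - 3 * Real.sin α * Real.sin β * Real.sin α' * Real.sin β'
            + 3 * Real.cos β * Real.cos β') : ℝ) : ℂ) * tomogram ρ (-(1/2)) α' β'
            * ((Real.sin β' : ℝ) : ℂ) := by
      intro α' β'
      simp only [kernelZ]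
      norm_num
    simp only [hk]
    rw [core ρ (-(1/2)) α β, rhs_eq]
    push_cast
    field_simp
    ring
  · have hk : ∀ α' β' : ℝ,
        ((kernelZ (1/2) α β (1/2) α' β' : ℂ) * tomogram ρ (1/2) α' β'
          + (kernelZ (1/2) α β (-(1/2)) α' β' : ℂ) * tomogram ρ (-(1/2)) α' β')
          * (Real.sin β' : ℂ)
        = (((1/2) * (1 - 3 * Real.cos α * Real.sin β * Real.cos α' * Real.sin β'
            - 3 * Real.sin α * Real.sin β * Real.sin α' * Real.sin β'
            + 3 * Real.cos β * Real.cos β') : ℝ) : ℂ) * tomogram ρ (1/2) α' β'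
            * ((Real.sin β' : ℝ) : ℂ) := by
      intro α' β'
      simp only [kernelZ]
      norm_num
    simp only [hk]
    rw [core ρ (1/2) α β, rhs_eq]
    push_cast
    field_simp
    ring
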